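/- For weights w ∈ Δ^{n-1} and quantile functions g_1,...,g_n of measures μ_1,...,μ_n on ℝ, the quantile function g_B = Σ_{i=1}^n w_i g_i minimizes g ↦ Σ_i w_i ∫_0^1 (g(s) - g_i(s))² ds over all quantile functions g, and the minimum value equals Σ_i w_i ∫_0^1 (g_B(s) - g_i(s))² ds. -/

import Mathlib

set_option maxHeartbeats 1000000


open MeasureTheory

private lemma mul_int_aux {α : Type*} [MeasurableSpace α] {μ : Measure α}
    {f g : α → ℝ} (hf : MemLp f 2 μ) (hg : MemLp g 2 μ) :
    Integrable (fun s => f s * g s) μ := by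
  have h := MemLp.smul (E := ℝ) (𝕜 := ℝ) (p := 2) (q := 2) (r := 1) hg hf
    (hpqr := ⟨by simp [ENNReal.inv_two_add_inv_two]⟩)
  have : (f • g) = fun s => f s * g s := rfl
  rw [this] at h
  exact memLp_one_iff_integrable.mp h

/-- The weighted average of quantile functions g_B = Σ wᵢ gᵢ is itself a quantile function
and minimizes the Fréchet function in quantile coordinates over all quantile functions. -/
theorem barycenter_quantile_minimizes_frechet_function
    {n : ℕ}
    (w : Fin n → ℝ) (hw : ∀ i, 0 ≤ w i) (hw1 : ∑ i, w i = 1)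
    (g : Fin n → ℝ → ℝ)
    (hmono : ∀ i, MonotoneOn (g i) (Set.Ioo 0 1))
    (hL2 : ∀ i, MemLp (g i) 2 (volume.restrict (Set.Ioo (0:ℝ) 1)))
    (gB : ℝ → ℝ) (hgB : ∀ s, gB s = ∑ i, w i * g i s) :
    MonotoneOn gB (Set.Ioo 0 1) ∧
    (∀ h : ℝ → ℝ, MonotoneOn h (Set.Ioo 0 1) →
        MemLp h 2 (volume.restrict (Set.Ioo (0:ℝ) 1)) →
        ∑ i, w i * ∫ s in Set.Ioo (0:ℝ) 1, (gB s - g i s) ^ 2 ≤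
          ∑ i, w i * ∫ s in Set.Ioo (0:ℝ) 1, (h s - g i s) ^ 2) := by
  set μ := volume.restrict (Set.Ioo (0:ℝ) 1) with hμ
  have hgBfun : gB = fun s => ∑ i, w i * g i s := funext hgB
  have hgBmem : MemLp gB 2 μ := by
    rw [hgBfun]
    exact memLp_finset_sum _ (fun i _ => (hL2 i).const_mul (w i))
  constructor
  · intro s hs t ht hst
    rw [hgB s, hgB t]
    exact Finset.sum_le_sum fun i _ =>
      mul_le_mul_of_nonneg_left (hmono i hs ht hst) (hw i)
  · intro h hhmono hh2
    have hBi : ∀ i, MemLp (fun s => gB s - g i s) 2 μ := fun i => hgBmem.sub (hL2 i)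
    have hhB : MemLp (fun s => h s - gB s) 2 μ := hh2.sub hgBmem
    have intA : Integrable (fun s => (h s - gB s) ^ 2) μ := hhB.integrable_sq
    have intB : ∀ i, Integrable (fun s => (gB s - g i s) ^ 2) μ := fun i =>
      (hBi i).integrable_sq
    have intC : ∀ i, Integrable (fun s => (h s - gB s) * (gB s - g i s)) μ := fun i =>
      mul_int_aux hhB (hBi i)
    have intC2 : ∀ i, Integrable (fun s => 2 * ((h s - gB s) * (gB s - g i s))) μ :=
      fun i => (intC i).const_mul 2
    -- expansion of each integral
    have key : ∀ i, (∫ s in Set.Ioo (0:ℝ) 1, (h s - g i s) ^ 2) =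
        (∫ s in Set.Ioo (0:ℝ) 1, (h s - gB s) ^ 2) +
        (∫ s in Set.Ioo (0:ℝ) 1, 2 * ((h s - gB s) * (gB s - g i s))) +
        (∫ s in Set.Ioo (0:ℝ) 1, (gB s - g i s) ^ 2) := by
      intro i
      have : (fun s => (h s - g i s) ^ 2) =
          fun s => (h s - gB s) ^ 2 + 2 * ((h s - gB s) * (gB s - g i s)) +
            (gB s - g i s) ^ 2 := by
        funext s; ring
      have e1 := integral_add intA (intC2 i)
      have e2 := integral_add (intA.add (intC2 i)) (intB i)
      simp only [Pi.add_apply] at e2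
      rw [this, e2, e1]
    -- the cross terms vanish
    have cross : ∑ i, w i * ∫ s in Set.Ioo (0:ℝ) 1,
        2 * ((h s - gB s) * (gB s - g i s)) = 0 := by
      have step : ∀ i, w i * ∫ s in Set.Ioo (0:ℝ) 1, 2 * ((h s - gB s) * (gB s - g i s)) =
          ∫ s in Set.Ioo (0:ℝ) 1, w i * (2 * ((h s - gB s) * (gB s - g i s))) := by
        intro i
        rw [← integral_const_mul]
      rw [Finset.sum_congr rfl (fun i _ => step i),
        ← integral_finset_sum _ (fun i _ => (intC2 i).const_mul (w i))]
      have : ∀ s, ∑ i, w i * (2 * ((h s - gB s) * (gB s - g i s))) = 0 := by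
        intro s
        have h1 : ∑ i, w i * (2 * ((h s - gB s) * (gB s - g i s))) =
            2 * (h s - gB s) * gB s * (∑ i, w i) -
            2 * (h s - gB s) * (∑ i, w i * g i s) := by
          rw [Finset.mul_sum, Finset.mul_sum, ← Finset.sum_sub_distrib]
          exact Finset.sum_congr rfl fun i _ => by ring
        rw [h1, hw1, ← hgB s]; ring
      simp only [this, integral_zero]
    have hA : 0 ≤ ∫ s in Set.Ioo (0:ℝ) 1, (h s - gB s) ^ 2 :=
      integral_nonneg fun s => sq_nonneg _
    calc ∑ i, w i * ∫ s in Set.Ioo (0:ℝ) 1, (gB s - g i s) ^ 2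
        ≤ (∑ i, w i) * (∫ s in Set.Ioo (0:ℝ) 1, (h s - gB s) ^ 2) +
          (∑ i, w i * ∫ s in Set.Ioo (0:ℝ) 1, 2 * ((h s - gB s) * (gB s - g i s))) +
          ∑ i, w i * ∫ s in Set.Ioo (0:ℝ) 1, (gB s - g i s) ^ 2 := by
          rw [cross, hw1]; linarith
      _ = ∑ i, w i * ∫ s in Set.Ioo (0:ℝ) 1, (h s - g i s) ^ 2 := by
          rw [Finset.sum_mul, ← Finset.sum_add_distrib, ← Finset.sum_add_distrib]
          exact Finset.sum_congr rfl fun i _ => by rw [key i]; ring
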